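/- For any real θ > 0 and positive integer n, θ(log(1+n/θ) - 1 + θ/(n+θ)) + n/(2(θ+n)) - 1 ≤ θ ∑_{i=1}^n 1/(θ+i-1) - θ² ∑_{i=1}^n 1/(θ+i-1)² ≤ θ(log(1+n/θ) - 1 + θ/(n+θ)) + n/(θ+n). -/

import Mathlib

open Real Finset

/-- Trapezoid bound: for `1 ≤ y`, `2 log y ≤ y - 1/y`. -/
lemma aux_two_log_le {y : ℝ} (hy : 1 ≤ y) : 2 * Real.log y ≤ y - 1 / y := by
  have hy0 : 0 < y := lt_of_lt_of_le one_pos hy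
  have h1 : Real.log y ≤ Real.sinh (Real.log y) :=
    Real.self_le_sinh_iff.mpr (Real.log_nonneg hy)
  rw [Real.sinh_log hy0] at h1
  rw [one_div]
  linarith

lemma aux_log_sub {t : ℝ} (ht : 0 < t) :
    Real.log (t + 1) - Real.log t = Real.log ((t + 1) / t) := by
  rw [Real.log_div (by linarith) (ne_of_gt ht)]

/-- Upper bound: `log(t+1) - log t ≤ (1/t + 1/(t+1))/2`. -/
lemma aux_log_le {t : ℝ} (ht : 0 < t) :
    Real.log (t + 1) - Real.log t ≤ (1 / t + 1 / (t + 1)) / 2 := by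
  have ht1 : (0:ℝ) < t + 1 := by linarith
  have hy : (1:ℝ) ≤ (t + 1) / t := by
    rw [le_div_iff₀ ht]; linarith
  have h := aux_two_log_le hy
  rw [← aux_log_sub ht] at h
  have hkey : (t + 1) / t - 1 / ((t + 1) / t) = 1 / t + 1 / (t + 1) := by
    field_simp
    ring
  rw [hkey] at h
  linarith

/-- Lower bound: `1/(t+1) ≤ log(t+1) - log t`. -/
lemma aux_log_ge {t : ℝ} (ht : 0 < t) :
    1 / (t + 1) ≤ Real.log (t + 1) - Real.log t := by
  have ht1 : (0:ℝ) < t + 1 := by linarith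
  have h := Real.log_le_sub_one_of_pos (x := t / (t + 1)) (by positivity)
  rw [Real.log_div (ne_of_gt ht) (ne_of_gt ht1)] at h
  have : t / (t + 1) - 1 = -(1 / (t + 1)) := by field_simp; ring
  rw [this] at h
  linarith

theorem stmt_11 (θ : ℝ) (hθ : 0 < θ) (n : ℕ) (hn : 1 ≤ n) :
    θ * (Real.log (1 + n / θ) - 1 + θ / (n + θ)) + n / (2 * (θ + n)) - 1 ≤
      θ * ∑ i ∈ Finset.range n, 1 / (θ + i)
        - θ ^ 2 * ∑ i ∈ Finset.range n, 1 / (θ + i) ^ 2 ∧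
    θ * ∑ i ∈ Finset.range n, 1 / (θ + i)
        - θ ^ 2 * ∑ i ∈ Finset.range n, 1 / (θ + i) ^ 2 ≤
      θ * (Real.log (1 + n / θ) - 1 + θ / (n + θ)) + n / (θ + n) := by
  have hP : (0:ℝ) < θ + n := by positivity
  have hti : ∀ i : ℕ, (0:ℝ) < θ + i := fun i => by positivity
  -- telescoping identities
  have tele_log : ∑ i ∈ Finset.range n, (Real.log (θ + i + 1) - Real.log (θ + i))
      = Real.log (θ + n) - Real.log θ := by
    have := Finset.sum_range_sub (fun i : ℕ => Real.log (θ + i)) n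
    simpa [add_assoc] using this
  have tele_inv : ∑ i ∈ Finset.range n, (1 / (θ + i) - 1 / (θ + i + 1))
      = 1 / θ - 1 / (θ + n) := by
    have := Finset.sum_range_sub' (fun i : ℕ => 1 / (θ + i)) n
    simpa [add_assoc] using this
  -- log of the main expression
  have hlog : Real.log (1 + n / θ) = Real.log (θ + n) - Real.log θ := by
    rw [show (1:ℝ) + n / θ = (θ + n) / θ by field_simp]
    exact Real.log_div (ne_of_gt hP) (ne_of_gt hθ)
  -- sum inequalities, termwise
  have hA_lo : ∑ i ∈ Finset.range n, (Real.log (θ + i + 1) - Real.log (θ + i))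
      ≤ ∑ i ∈ Finset.range n,
        (1 / (θ + i) - (1 / 2) * (1 / (θ + i) - 1 / (θ + i + 1))) := by
    refine Finset.sum_le_sum fun i _ => ?_
    have h := aux_log_le (hti i)
    linarith
  have hA_hi : ∑ i ∈ Finset.range n, (1 / (θ + i) - (Real.log (θ + i + 1) - Real.log (θ + i)))
      ≤ ∑ i ∈ Finset.range n, (1 / (θ + i) - 1 / (θ + i + 1)) := by
    refine Finset.sum_le_sum fun i _ => ?_
    have h := aux_log_ge (hti i)
    linarith
  have hB_lo : ∑ i ∈ Finset.range n, (1 / (θ + i) - 1 / (θ + i + 1))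
      ≤ ∑ i ∈ Finset.range n, 1 / (θ + i) ^ 2 := by
    refine Finset.sum_le_sum fun i _ => ?_
    have ht := hti i
    have ht1 : (0:ℝ) < θ + i + 1 := by linarith
    rw [div_sub_div _ _ (ne_of_gt ht) (ne_of_gt ht1), div_le_div_iff₀ (by positivity) (by positivity)]
    ring_nf
    linarith [hθ, (Nat.cast_nonneg i : (0:ℝ) ≤ (i:ℝ))]
  have hB_hi : θ ^ 2 * ∑ i ∈ Finset.range n, 1 / (θ + i) ^ 2
      ≤ θ ^ 2 * ∑ i ∈ Finset.range n, (1 / (θ + i) - 1 / (θ + i + 1))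
        + θ * ∑ i ∈ Finset.range n, (1 / (θ + i) - 1 / (θ + i + 1)) := by
    rw [Finset.mul_sum, Finset.mul_sum, Finset.mul_sum, ← Finset.sum_add_distrib]
    refine Finset.sum_le_sum fun i _ => ?_
    have ht := hti i
    have ht1 : (0:ℝ) < θ + i + 1 := by linarith
    have hd : 1 / (θ + i) - 1 / (θ + i + 1) = 1 / ((θ + i) * (θ + i + 1)) := by
      field_simp; ring
    rw [hd]
    have hθt : θ ≤ θ + i := le_add_of_nonneg_right (Nat.cast_nonneg i)
    rw [show θ ^ 2 * (1 / (θ + ↑i) ^ 2) = θ ^ 2 / (θ + ↑i) ^ 2 by ring,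
        show θ ^ 2 * (1 / ((θ + ↑i) * (θ + ↑i + 1))) + θ * (1 / ((θ + ↑i) * (θ + ↑i + 1)))
          = (θ ^ 2 + θ) / ((θ + ↑i) * (θ + ↑i + 1)) by ring,
        div_le_div_iff₀ (by positivity) (by positivity)]
    nlinarith [mul_le_mul_of_nonneg_left hθt (le_of_lt hθ), sq_nonneg (θ + (i:ℝ)), mul_pos ht ht1]
  -- abbreviations
  set S1 := ∑ i ∈ Finset.range n, 1 / (θ + i) with hS1
  set S2 := ∑ i ∈ Finset.range n, 1 / (θ + i) ^ 2 with hS2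
  have hsplitA : ∑ i ∈ Finset.range n,
        (1 / (θ + i) - (1 / 2) * (1 / (θ + i) - 1 / (θ + i + 1)))
      = S1 - (1 / 2) * (1 / θ - 1 / (θ + n)) := by
    rw [Finset.sum_sub_distrib, ← Finset.mul_sum, tele_inv]
  have hsplitA' : ∑ i ∈ Finset.range n,
        (1 / (θ + i) - (Real.log (θ + i + 1) - Real.log (θ + i)))
      = S1 - (Real.log (θ + n) - Real.log θ) := by
    rw [Finset.sum_sub_distrib, tele_log]
  rw [hsplitA] at hA_lo
  rw [hsplitA'] at hA_hi
  rw [tele_inv] at hA_hi hB_lo hB_hi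
  rw [tele_log] at hA_lo
  -- arithmetic facts
  have hc : θ * (1 / θ - 1 / (θ + n)) = (n : ℝ) / (θ + n) := by
    field_simp; ring
  have hc2 : θ ^ 2 * (1 / θ - 1 / (θ + n)) = θ - θ ^ 2 / (θ + n) := by
    field_simp
  have hnP : (n : ℝ) / (θ + n) ≤ 1 := by
    rw [div_le_one hP]; linarith
  have hn2 : (n : ℝ) / (2 * (θ + n)) = (1 / 2) * ((n : ℝ) / (θ + n)) := by
    field_simp
  have hcomm : (↑n : ℝ) + θ = θ + ↑n := add_comm _ _
  rw [hcomm]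
  constructor
  · -- lower bound
    have h1 : θ * (Real.log (θ + n) - Real.log θ)
        ≤ θ * (S1 - (1 / 2) * (1 / θ - 1 / (θ + n))) :=
      mul_le_mul_of_nonneg_left hA_lo (le_of_lt hθ)
    rw [hlog]
    have e1 : θ * (1 / 2 * (1 / θ - 1 / (θ + (n:ℝ)))) = 1 / 2 * ((n:ℝ) / (θ + n)) := by
      rw [show θ * (1 / 2 * (1 / θ - 1 / (θ + (n:ℝ)))) = 1 / 2 * (θ * (1 / θ - 1 / (θ + (n:ℝ)))) by ring, hc]
    have h1' : θ * (Real.log (θ + n) - Real.log θ) ≤ θ * S1 - 1 / 2 * ((n:ℝ) / (θ + n)) := by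
      rw [show θ * (S1 - 1 / 2 * (1 / θ - 1 / (θ + (n:ℝ))))
          = θ * S1 - θ * (1 / 2 * (1 / θ - 1 / (θ + (n:ℝ)))) by ring, e1] at h1
      exact h1
    have hB' : θ ^ 2 * S2 ≤ θ - θ ^ 2 / (θ + n) + (n:ℝ) / (θ + n) := by
      rw [hc2, hc] at hB_hi; linarith
    have egoal : θ * (Real.log (θ + n) - Real.log θ - 1 + θ / (θ + n)) + (n:ℝ) / (2 * (θ + n)) - 1
        = θ * (Real.log (θ + n) - Real.log θ) - θ + θ ^ 2 / (θ + n) + 1 / 2 * ((n:ℝ) / (θ + n)) - 1 := by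
      rw [hn2]; ring
    rw [egoal]
    linarith [h1', hB', hnP]
  · -- upper bound
    have h2 : θ * (S1 - (Real.log (θ + n) - Real.log θ)) ≤ θ * (1 / θ - 1 / (θ + n)) :=
      mul_le_mul_of_nonneg_left hA_hi (le_of_lt hθ)
    have h3 : θ ^ 2 * (1 / θ - 1 / (θ + n)) ≤ θ ^ 2 * S2 :=
      mul_le_mul_of_nonneg_left hB_lo (by positivity)
    rw [hlog]
    rw [hc] at h2
    rw [hc2] at h3
    have h2' : θ * S1 - θ * (Real.log (θ + n) - Real.log θ) ≤ (n:ℝ) / (θ + n) := by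
      rw [show θ * (S1 - (Real.log (θ + n) - Real.log θ))
          = θ * S1 - θ * (Real.log (θ + n) - Real.log θ) by ring] at h2
      exact h2
    have egoal : θ * (Real.log (θ + n) - Real.log θ - 1 + θ / (θ + n)) + (n:ℝ) / (θ + n)
        = θ * (Real.log (θ + n) - Real.log θ) - θ + θ ^ 2 / (θ + n) + (n:ℝ) / (θ + n) := by
      ring
    rw [egoal]
    linarith [h2', h3]
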